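/- Let ψ(θ) = q²·(cos(2π(qθ + β)) − cos(2πqθ)) where q ≥ 1 is an integer and β ∈ ℝ satisfies |β − 1/2| (mod 1) ≤ q⁻⁶. Let B = ⋃_{k=0}^{2q} [k/(2q) − 1/(2q^{3/2}), k/(2q) + 1/(2q^{3/2})]. Then for q sufficiently large, for all θ ∈ [0,1] \ B one has |ψ'(θ)| ≥ q^{5/2} and |ψ''(θ)| ≤ 9π²·q⁴. -/

import Mathlib

open Real Set

private lemma deriv_cos_form (c a b : ℝ) :
    deriv (fun θ : ℝ => c * (Real.cos (a * θ + b) - Real.cos (a * θ)))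
      = fun θ : ℝ => c * a * (Real.sin (a * θ) - Real.sin (a * θ + b)) := by
  funext θ
  have h1 : HasDerivAt (fun θ : ℝ => a * θ + b) a θ := by
    simpa using ((hasDerivAt_id θ).const_mul a).add_const b
  have h2 : HasDerivAt (fun θ : ℝ => a * θ) a θ := by
    simpa using (hasDerivAt_id θ).const_mul a
  have h := (h1.cos.sub h2.cos).const_mul c
  exact h.deriv.trans (by ring)

private lemma deriv_sin_form (c a b : ℝ) :
    deriv (fun θ : ℝ => c * (Real.sin (a * θ) - Real.sin (a * θ + b)))
      = fun θ : ℝ => c * a * (Real.cos (a * θ) - Real.cos (a * θ + b)) := by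
  funext θ
  have h1 : HasDerivAt (fun θ : ℝ => a * θ + b) a θ := by
    simpa using ((hasDerivAt_id θ).const_mul a).add_const b
  have h2 : HasDerivAt (fun θ : ℝ => a * θ) a θ := by
    simpa using (hasDerivAt_id θ).const_mul a
  have h := (h2.sin.sub h1.sin).const_mul c
  exact h.deriv.trans (by ring)

private lemma abs_sin_sub_sin (a b : ℝ) : |Real.sin a - Real.sin b| ≤ |a - b| := by
  rw [Real.sin_sub_sin]
  calc |2 * Real.sin ((a - b) / 2) * Real.cos ((a + b) / 2)|
      = 2 * |Real.sin ((a - b) / 2)| * |Real.cos ((a + b) / 2)| := by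
        rw [abs_mul, abs_mul]; norm_num
    _ ≤ 2 * |(a - b) / 2| * 1 := by
        have h1 : |Real.sin ((a - b) / 2)| ≤ |(a - b) / 2| := Real.abs_sin_le_abs
        have h2 : |Real.cos ((a + b) / 2)| ≤ 1 := Real.abs_cos_le_one _
        nlinarith [abs_nonneg (Real.sin ((a - b) / 2)), abs_nonneg ((a - b) / 2),
          abs_nonneg (Real.cos ((a + b) / 2))]
    _ = |a - b| := by rw [abs_div, abs_two]; ring

set_option maxHeartbeats 1600000 in
/-- Derivative estimates for `ψ(θ) = q²(cos(2π(qθ+β)) − cos(2πqθ))` outside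
the bad set `B`: for `q` large enough, if `β` is within `q⁻⁶` of `1/2` mod 1,
then `|ψ'| ≥ q^{5/2}` and `|ψ''| ≤ 9π²q⁴` on `[0,1] \ B`. -/
theorem psi_derivative_estimates :
    ∃ Q₀ : ℕ, ∀ q : ℕ, Q₀ ≤ q → ∀ β : ℝ,
      (∃ k : ℤ, |β - 1 / 2 + (k : ℝ)| ≤ ((q : ℝ) ^ 6)⁻¹) →
      ∀ ψ : ℝ → ℝ,
        (ψ = fun θ => (q : ℝ) ^ 2 *
            (Real.cos (2 * π * ((q : ℝ) * θ + β)) - Real.cos (2 * π * (q : ℝ) * θ))) →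
        ∀ B : Set ℝ,
          (B = ⋃ k ∈ Finset.range (2 * q + 1),
              Icc ((k : ℝ) / (2 * q) - 1 / (2 * (q : ℝ) ^ ((3 : ℝ) / 2)))
                  ((k : ℝ) / (2 * q) + 1 / (2 * (q : ℝ) ^ ((3 : ℝ) / 2)))) →
          ∀ θ ∈ Icc (0 : ℝ) 1 \ B,
            (q : ℝ) ^ ((5 : ℝ) / 2) ≤ |deriv ψ θ| ∧
            |deriv (deriv ψ) θ| ≤ 9 * π ^ 2 * (q : ℝ) ^ 4 := by
  refine ⟨2, fun q hq β hβ ψ hψ B hB θ hθ => ?_⟩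
  obtain ⟨hθ01, hθB⟩ := hθ
  have hq1 : (1 : ℝ) ≤ (q : ℝ) := by exact_mod_cast Nat.one_le_of_lt hq
  have hq2 : (2 : ℝ) ≤ (q : ℝ) := by exact_mod_cast hq
  have hq0 : (0 : ℝ) < (q : ℝ) := by linarith
  have hπ : (0 : ℝ) < π := Real.pi_pos
  set c : ℝ := (q : ℝ) ^ 2 with hc
  set a : ℝ := 2 * π * q with ha
  have hψ' : ψ = fun θ : ℝ => c * (Real.cos (a * θ + 2 * π * β) - Real.cos (a * θ)) := by
    rw [hψ]; funext s
    rw [show 2 * π * ((q : ℝ) * s + β) = a * s + 2 * π * β by rw [ha]; ring]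
  have hd1 : deriv ψ = fun θ : ℝ => c * a * (Real.sin (a * θ) - Real.sin (a * θ + 2 * π * β)) := by
    rw [hψ', deriv_cos_form]
  have hd2 : deriv (deriv ψ)
      = fun θ : ℝ => c * a * a * (Real.cos (a * θ) - Real.cos (a * θ + 2 * π * β)) := by
    rw [hd1, deriv_sin_form]
  constructor
  · -- first derivative bound
    obtain ⟨m, hm⟩ := hβ
    set ε : ℝ := β - 1 / 2 + m with hε
    set t : ℝ := 2 * q * θ with ht
    set k : ℤ := round t with hk
    have ht0 : 0 ≤ t := by
      have := hθ01.1; positivity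
    have ht2q : t ≤ 2 * q := by
      have h1 := hθ01.2
      calc t = 2 * q * θ := rfl
        _ ≤ 2 * q * 1 := by nlinarith
        _ = 2 * q := by ring
    have hk0 : 0 ≤ k := by
      rw [hk, round_eq, Int.le_floor]; push_cast; linarith
    have hk2q : k ≤ 2 * q := by
      rw [hk, round_eq, Int.floor_le_iff]; push_cast; linarith
    have hkr : |t - (k : ℝ)| ≤ 1 / 2 := abs_sub_round t
    set r : ℝ := (q : ℝ) ^ ((1 : ℝ) / 2) with hr
    have hr1 : (1 : ℝ) ≤ r := by
      rw [hr]
      exact Real.one_le_rpow hq1 (by norm_num)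
    have hr0 : (0 : ℝ) < r := by linarith
    have hrq : r ≤ (q : ℝ) := by
      rw [hr]
      calc (q : ℝ) ^ ((1 : ℝ) / 2) ≤ (q : ℝ) ^ (1 : ℝ) :=
            Real.rpow_le_rpow_of_exponent_le hq1 (by norm_num)
        _ = q := Real.rpow_one _
    have hq32 : (q : ℝ) ^ ((3 : ℝ) / 2) = q * r := by
      rw [show ((3 : ℝ) / 2) = (1 : ℝ) + (1 : ℝ) / 2 by norm_num,
          Real.rpow_add hq0, Real.rpow_one, hr]
    have hq52 : (q : ℝ) ^ ((5 : ℝ) / 2) * r = (q : ℝ) ^ 3 := by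
      rw [hr, ← Real.rpow_add hq0,
          show (5 : ℝ) / 2 + 1 / 2 = ((3 : ℕ) : ℝ) by norm_num, Real.rpow_natCast]
    -- distance from t to k is > 1/r
    have hfar : 1 / r < |t - (k : ℝ)| := by
      by_contra hcon
      push_neg at hcon
      apply hθB
      rw [hB]
      refine Set.mem_iUnion₂.2 ⟨k.toNat, Finset.mem_range.2 (by omega), ?_⟩
      have hkc : ((k.toNat : ℕ) : ℝ) = (k : ℝ) := by
        have h := Int.toNat_of_nonneg hk0
        exact_mod_cast congrArg (fun z : ℤ => (z : ℝ)) h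
      rw [Set.mem_Icc, hkc]
      have hδ : 1 / (2 * (q : ℝ) ^ ((3 : ℝ) / 2)) = 1 / r / (2 * q) := by
        rw [hq32, div_div]; congr 1; ring
      have h1 : |θ - (k : ℝ) / (2 * q)| ≤ 1 / r / (2 * q) := by
        have h2 : t - (k : ℝ) = (2 * q) * (θ - (k : ℝ) / (2 * q)) := by
          rw [ht]; field_simp
        rw [h2, abs_mul, abs_of_pos (show (0 : ℝ) < 2 * q by positivity)] at hcon
        exact (le_div_iff₀ (show (0 : ℝ) < 2 * q by positivity)).2 (by linarith)
      rw [hδ]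
      obtain ⟨hl, hrr⟩ := abs_le.1 h1
      exact ⟨by linarith, by linarith⟩
    -- |sin (π t)| ≥ 2 / r
    have hsin : 2 / r ≤ |Real.sin (π * t)| := by
      set u : ℝ := t - (k : ℝ) with hu
      have hpt : π * t = π * u + k * π := by rw [hu]; ring
      have h1 : |Real.sin (π * t)| = |Real.sin (π * u)| := by
        rw [hpt, Real.sin_add_int_mul_pi, abs_mul]
        have hpm : ((-1 : ℝ) ^ k = 1) ∨ ((-1 : ℝ) ^ k = -1) := by
          rcases Int.even_or_odd k with he | ho
          · left; exact he.neg_one_zpow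
          · right; exact ho.neg_one_zpow
        rcases hpm with hh | hh <;> rw [hh] <;> simp
      have hu12 : |u| ≤ 1 / 2 := hkr
      have hur : 1 / r < |u| := hfar
      have h2 : |Real.sin (π * u)| = Real.sin (π * |u|) := by
        rcases abs_cases u with ⟨h, hpos⟩ | ⟨h, hneg⟩
        · have hu' : u ≤ 1 / 2 := h ▸ hu12
          rw [h]
          exact abs_of_nonneg (Real.sin_nonneg_of_nonneg_of_le_pi (by positivity)
            (by nlinarith))
        · have hu' : -u ≤ 1 / 2 := h ▸ hu12
          have hnp : Real.sin (π * u) ≤ 0 := by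
            have h3 : 0 ≤ Real.sin (π * -u) :=
              Real.sin_nonneg_of_nonneg_of_le_pi (by nlinarith) (by nlinarith)
            rw [show π * -u = -(π * u) by ring, Real.sin_neg] at h3
            linarith
          rw [h, abs_of_nonpos hnp, show π * -u = -(π * u) by ring, Real.sin_neg]
      rw [h1, h2]
      have hle : π * |u| ≤ π / 2 := by nlinarith [abs_nonneg u]
      have hms := Real.mul_le_sin (x := π * |u|) (by positivity) hle
      have heq : 2 / π * (π * |u|) = 2 * |u| := by field_simp
      have h1r : 2 / r = 2 * (1 / r) := by ring
      linarith [hur, hms, heq ▸ hms]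
    -- relate sin (aθ + 2πβ) to -sin(aθ + 2πε)
    have hx : a * θ = π * t := by rw [ha, ht]; ring
    have hkey : Real.sin (a * θ + 2 * π * β) = -Real.sin (a * θ + 2 * π * ε) := by
      have harg : a * θ + 2 * π * β = (a * θ + 2 * π * ε + π) + (-m : ℤ) * (2 * π) := by
        rw [hε]; push_cast; ring
      rw [harg, Real.sin_add_int_mul_two_pi, Real.sin_add_pi]
    -- error bound
    have herr : |Real.sin (a * θ + 2 * π * ε) - Real.sin (a * θ)| ≤ 1 / r := by
      calc |Real.sin (a * θ + 2 * π * ε) - Real.sin (a * θ)|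
          ≤ |a * θ + 2 * π * ε - a * θ| := abs_sin_sub_sin _ _
        _ = 2 * π * |ε| := by
            rw [show a * θ + 2 * π * ε - a * θ = 2 * π * ε by ring,
              abs_mul, abs_of_pos (by positivity : (0 : ℝ) < 2 * π)]
        _ ≤ 2 * π * ((q : ℝ) ^ 6)⁻¹ := by gcongr
        _ ≤ 1 / r := by
            have hπ4 : π ≤ 4 := Real.pi_le_four
            have h32 : (32 : ℝ) ≤ (q : ℝ) ^ 5 := by
              calc (32 : ℝ) = 2 ^ 5 := by norm_num
                _ ≤ (q : ℝ) ^ 5 := pow_le_pow_left₀ (by norm_num) hq2 5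
            rw [show 2 * π * ((q : ℝ) ^ 6)⁻¹ = (2 * π) / (q : ℝ) ^ 6 by ring,
              div_le_div_iff₀ (by positivity) hr0]
            have s1 : 2 * π * r ≤ 8 * r := by nlinarith
            have s2 : 8 * r ≤ 8 * (q : ℝ) := by nlinarith
            have s3 : 8 * (q : ℝ) ≤ (q : ℝ) ^ 5 * q := by nlinarith
            have s4 : (1 : ℝ) * (q : ℝ) ^ 6 = (q : ℝ) ^ 5 * q := by ring
            linarith
    -- put it together
    have hS : 2 / r ≤ |Real.sin (a * θ)| := by rw [hx]; exact hsin
    have hder : deriv ψ θ = c * a * (Real.sin (a * θ) - Real.sin (a * θ + 2 * π * β)) := by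
      rw [hd1]
    rw [hder, hkey]
    have hsplit : Real.sin (a * θ) - -Real.sin (a * θ + 2 * π * ε)
        = 2 * Real.sin (a * θ) + (Real.sin (a * θ + 2 * π * ε) - Real.sin (a * θ)) := by ring
    rw [hsplit]
    set S : ℝ := Real.sin (a * θ) with hSdef
    set D : ℝ := Real.sin (a * θ + 2 * π * ε) - S with hDdef
    have h2S : |2 * S| ≤ |2 * S + D| + |D| := by
      calc |2 * S| = |(2 * S + D) - D| := by congr 1; ring
        _ ≤ |2 * S + D| + |D| := abs_sub _ _
    have h2S' : 2 * (2 / r) ≤ |2 * S| := by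
      rw [abs_mul, abs_two]; linarith
    have hsum : 3 / r ≤ |2 * S + D| := by
      have : 2 * (2 / r) = 4 / r := by ring
      have h34 : 3 / r = 4 / r - 1 / r := by ring
      linarith
    have hca0 : (0 : ℝ) ≤ c * a := by rw [hc, ha]; positivity
    calc (q : ℝ) ^ ((5 : ℝ) / 2) = (q : ℝ) ^ 3 / r := by
          rw [← hq52]; field_simp
      _ ≤ (c * a) * (3 / r) := by
          have hform : (c * a) * (3 / r) = 6 * π * (q : ℝ) ^ 3 / r := by
            rw [hc, ha]; ring
          rw [hform]
          gcongr
          nlinarith [Real.pi_gt_three, pow_pos hq0 3]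
      _ ≤ (c * a) * |2 * S + D| := by gcongr
      _ = |c * a * (2 * S + D)| := by rw [abs_mul, abs_of_nonneg hca0]
  · -- second derivative bound
    rw [hd2]
    have h1 : |Real.cos (a * θ) - Real.cos (a * θ + 2 * π * β)| ≤ 2 := by
      calc |Real.cos (a * θ) - Real.cos (a * θ + 2 * π * β)|
          ≤ |Real.cos (a * θ)| + |Real.cos (a * θ + 2 * π * β)| := abs_sub _ _
        _ ≤ 1 + 1 := add_le_add (Real.abs_cos_le_one _) (Real.abs_cos_le_one _)
        _ = 2 := by norm_num
    have hca : c * a * a = 4 * π ^ 2 * (q : ℝ) ^ 4 := by rw [hc, ha]; ring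
    calc |c * a * a * (Real.cos (a * θ) - Real.cos (a * θ + 2 * π * β))|
        = |c * a * a| * |Real.cos (a * θ) - Real.cos (a * θ + 2 * π * β)| := abs_mul _ _
      _ ≤ |c * a * a| * 2 := by gcongr
      _ = 4 * π ^ 2 * (q : ℝ) ^ 4 * 2 := by
          rw [hca, abs_of_pos (by positivity)]
      _ ≤ 9 * π ^ 2 * (q : ℝ) ^ 4 := by nlinarith [sq_nonneg π, pow_pos hq0 4]
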